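/- arXiv:2108.01558 — 4 statements merged into one kernel-verified Lean document; each statement's English description precedes it below -/
import Mathlib

section
/- Let τ_0, ..., τ_n be distinct reals and let L_{j,n}(x) = Π_{m ≠ j} (x - τ_m)/(τ_j - τ_m) be the Lagrange basis polynomials. For i ≠ k (with 0 ≤ i, k ≤ n), the Lagrange basis polynomial on the node set with τ_k removed satisfies L_{i,n-1}(x) = L_{i,n}(x) - (w_{n,i}/w_{n,k}) * L_{k,n}(x), where w_{n,j} = Π_{m ≠ j} 1/(τ_j - τ_m) are the barycentric weights. -/
/-- Lagrange basis polynomial of degree `N` associated with node `τ j`, over the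
nodes `τ 0, …, τ N`. -/
noncomputable def lag (τ : ℕ → ℝ) (N j : ℕ) (x : ℝ) : ℝ :=
  ∏ r ∈ (Finset.range (N + 1)).erase j, (x - τ r) / (τ j - τ r)

/-- Barycentric weight `w_{N,j}`. -/
noncomputable def lagWeight (τ : ℕ → ℝ) (N j : ℕ) : ℝ :=
  ∏ r ∈ (Finset.range (N + 1)).erase j, 1 / (τ j - τ r)

theorem lagrange_node_removal (n : ℕ) (τ : ℕ → ℝ)
    (hτ : ∀ p q, p ≤ n → q ≤ n → p ≠ q → τ p ≠ τ q)
    (i k : ℕ) (hi : i ≤ n) (hk : k ≤ n) (hik : i ≠ k) (x : ℝ) :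
    (∏ r ∈ (((Finset.range (n + 1)).erase k).erase i), (x - τ r) / (τ i - τ r)) =
      lag τ n i x - lagWeight τ n i / lagWeight τ n k * lag τ n k x := by
  have hik' : τ i - τ k ≠ 0 := sub_ne_zero.2 (hτ i k hi hk hik)
  have hki' : τ k - τ i ≠ 0 := sub_ne_zero.2 (hτ k i hk hi hik.symm)
  have hiS : i ∈ (Finset.range (n+1)).erase k :=
    Finset.mem_erase.2 ⟨hik, Finset.mem_range.2 (Nat.lt_succ_of_le hi)⟩
  have hkS : k ∈ (Finset.range (n+1)).erase i :=
    Finset.mem_erase.2 ⟨hik.symm, Finset.mem_range.2 (Nat.lt_succ_of_le hk)⟩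
  set S' := ((Finset.range (n+1)).erase k).erase i with hS'
  have hcomm : ((Finset.range (n+1)).erase i).erase k = S' := Finset.erase_right_comm
  have hBne : ∀ r ∈ S', τ k - τ r ≠ 0 := by
    intro r hr
    simp only [hS', Finset.mem_erase, Finset.mem_range] at hr
    exact sub_ne_zero.2 (hτ k r hk (Nat.lt_succ_iff.mp hr.2.2) (Ne.symm hr.2.1))
  have e1 : lag τ n i x = (x - τ k)/(τ i - τ k) * ∏ r ∈ S', (x - τ r)/(τ i - τ r) := by
    rw [lag, ← Finset.mul_prod_erase _ _ hkS, hcomm]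
  have e2 : lagWeight τ n i = 1/(τ i - τ k) * ∏ r ∈ S', 1/(τ i - τ r) := by
    rw [lagWeight, ← Finset.mul_prod_erase _ _ hkS, hcomm]
  have e3 : lag τ n k x = (x - τ i)/(τ k - τ i) * ∏ r ∈ S', (x - τ r)/(τ k - τ r) := by
    rw [lag, ← Finset.mul_prod_erase _ _ hiS]
  have e4 : lagWeight τ n k = 1/(τ k - τ i) * ∏ r ∈ S', 1/(τ k - τ r) := by
    rw [lagWeight, ← Finset.mul_prod_erase _ _ hiS]
  have split : ∀ c : ℕ → ℝ, (∏ r ∈ S', (x - τ r)/(c r)) =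
      (∏ r ∈ S', (x - τ r)) * ∏ r ∈ S', 1/(c r) := by
    intro c
    rw [← Finset.prod_mul_distrib]
    exact Finset.prod_congr rfl (fun r _ => by rw [div_eq_mul_one_div])
  have hAne : ∀ r ∈ S', τ i - τ r ≠ 0 := by
    intro r hr
    simp only [hS', Finset.mem_erase, Finset.mem_range] at hr
    exact sub_ne_zero.2 (hτ i r hi (Nat.lt_succ_iff.mp hr.2.2) (Ne.symm hr.1))
  have hB : (∏ r ∈ S', (τ k - τ r)) ≠ 0 := Finset.prod_ne_zero_iff.2 hBne
  have hA : (∏ r ∈ S', (τ i - τ r)) ≠ 0 := Finset.prod_ne_zero_iff.2 hAne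
  rw [e1, e2, e3, e4, split (fun r => τ i - τ r), split (fun r => τ k - τ r)]
  have hB' : (∏ r ∈ S', 1 / (τ k - τ r)) ≠ 0 :=
    Finset.prod_ne_zero_iff.2 (fun r hr => one_div_ne_zero (hBne r hr))
  field_simp
  ring
end

section
/- Let {φ_j} be a degree-graded sequence satisfying x φ_j = α_j φ_{j+1} + β_j φ_j + γ_j φ_{j-1} with α_j ≠ 0, φ_{-1}=0, φ_0=1. Then for all k ≥ 0: φ_2(x) φ_k(x) = (1/(α_0 α_1)) * [ α_{k+1} α_k φ_{k+2}(x) + α_k (β_{k+1} + β_k - β_1 - β_0) φ_{k+1}(x) + ((β_k - β_0)(β_k - β_1) - γ_1 α_0 + γ_k α_{k-1} + γ_{k+1} α_k) φ_k(x) + γ_k (β_k + β_{k-1} - β_1 - β_0) φ_{k-1}(x) + γ_k γ_{k-1} φ_{k-2}(x) ]. -/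
open Polynomial

theorem degree_graded_phi2_mul (φ : ℕ → Polynomial ℝ) (α β γ : ℕ → ℝ)
    (hdeg : ∀ j, (φ j).natDegree = j) (hφ0 : φ 0 = 1)
    (hα : ∀ j, α j ≠ 0) (hγ0 : γ 0 = 0)
    (hrec : ∀ j, X * φ j = C (α j) * φ (j + 1) + C (β j) * φ j + C (γ j) * φ (j - 1)) :
    ∀ k, φ 2 * φ k =
      C (1 / (α 0 * α 1)) *
        (C (α (k + 1) * α k) * φ (k + 2) +
          C (α k * (β (k + 1) + β k - β 1 - β 0)) * φ (k + 1) +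
          C ((β k - β 0) * (β k - β 1) - γ 1 * α 0 + γ k * α (k - 1) + γ (k + 1) * α k) * φ k +
          C (γ k * (β k + β (k - 1) - β 1 - β 0)) * φ (k - 1) +
          C (γ k * γ (k - 1)) * φ (k - 2)) := by
  have hne : α 0 * α 1 ≠ 0 := mul_ne_zero (hα 0) (hα 1)
  have cancel : ∀ P Q : Polynomial ℝ, C (α 0 * α 1) * P = Q → P = C (1 / (α 0 * α 1)) * Q := by
    intro P Q h
    rw [← h, ← mul_assoc, ← C_mul, one_div, inv_mul_cancel₀ hne, C_1, one_mul]
  have h0 := hrec 0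
  rw [hφ0, hγ0] at h0
  simp only [mul_one, map_zero, zero_mul, add_zero] at h0
  have h2 : C (α 0) * C (α 1) * φ 2 = (X - C (β 0)) * (X - C (β 1)) - C (γ 1) * C (α 0) := by
    have h1 := hrec 1
    rw [show (1 : ℕ) - 1 = 0 from rfl, hφ0, mul_one] at h1
    linear_combination (C (β 1) - X) * h0 - C (α 0) * h1
  intro k
  match k with
  | 0 =>
    apply cancel
    simp only [hγ0, hφ0, zero_mul, map_zero, mul_one, add_zero, zero_add,
      map_mul, map_add, map_sub]
    ring_nf
  | (m + 1) =>
    apply cancel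
    have e2 : m + 1 - 2 = m - 1 := by omega
    have e1 : m + 1 - 1 = m := by omega
    have e3 : m + 1 + 1 = m + 2 := by omega
    have e4 : m + 1 + 2 = m + 3 := by omega
    have R0 := hrec m
    have R1 := hrec (m + 1)
    have R2 := hrec (m + 2)
    rw [e1] at R1
    rw [show m + 2 - 1 = m + 1 from by omega, show m + 2 + 1 = m + 3 from by omega] at R2
    rw [e1, e2, e3, e4]
    simp only [map_mul, map_add, map_sub]
    linear_combination (φ (m + 1) : Polynomial ℝ) * h2 +
      (X + C (β (m + 1)) - C (β 0) - C (β 1)) * R1 +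
      C (α (m + 1)) * R2 + C (γ (m + 1)) * R0
end

section
/- Let {φ_j} be a degree-graded family as above and define the linearization coefficients c_{j,k,i} by φ_j φ_k = Σ_i c_{j,k,i} φ_i. Then they satisfy the recursion: c_{j,k,i} = (1/α_{j-1}) * ( α_{i-1} c_{j-1,k,i-1} + (β_i - β_{j-1}) c_{j-1,k,i} + γ_{i+1} c_{j-1,k,i+1} - γ_{j-1} c_{j-2,k,i} ) for j ≥ 2, with c_{0,k,i} = δ_{i,k} and c_{1,k,i} determined by φ_1 φ_k = (1/α_0)(α_k φ_{k+1} + (β_k - β_0) φ_k + γ_k φ_{k-1}). -/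
open Polynomial

private lemma phi_ne_zero (φ : ℕ → Polynomial ℝ)
    (hdeg : ∀ j, (φ j).natDegree = j) (hφ0 : φ 0 = 1) (N : ℕ) : φ N ≠ 0 := by
  cases N with
  | zero => rw [hφ0]; exact one_ne_zero
  | succ n => intro h; have := hdeg (n+1); rw [h] at this; simp at this

private lemma sum_eq_zero_coeffs (φ : ℕ → Polynomial ℝ)
    (hdeg : ∀ j, (φ j).natDegree = j) (hφ0 : φ 0 = 1) :
    ∀ (N : ℕ) (a : ℕ → ℝ), (∑ i ∈ Finset.range N, C (a i) * φ i) = 0 →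
      ∀ i < N, a i = 0 := by
  intro N
  induction N with
  | zero => intro a h i hi; omega
  | succ N ih =>
    intro a h i hi
    have hN : a N = 0 := by
      have hc := congrArg (fun p => Polynomial.coeff p N) h
      simp only [finset_sum_coeff, coeff_zero] at hc
      rw [Finset.sum_eq_single N] at hc
      · simp only [coeff_C_mul] at hc
        have hlead : (φ N).coeff N ≠ 0 := by
          have h2 : (φ N).coeff (φ N).natDegree ≠ 0 :=
            leadingCoeff_ne_zero.mpr (phi_ne_zero φ hdeg hφ0 N)
          rwa [hdeg N] at h2
        exact (mul_eq_zero.mp hc).resolve_right hlead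
      · intro b hb hbne
        have hlt : (φ b).natDegree < N := by
          rw [hdeg b]; have := Finset.mem_range.mp hb; omega
        simp [coeff_C_mul, coeff_eq_zero_of_natDegree_lt hlt]
      · intro hN'; exact absurd (Finset.self_mem_range_succ N) hN'
    rcases Nat.lt_succ_iff_lt_or_eq.mp hi with h' | h'
    · apply ih a _ i h'
      rw [Finset.sum_range_succ, hN] at h
      simpa using h
    · rw [h']; exact hN

private lemma coeffs_unique (φ : ℕ → Polynomial ℝ)
    (hdeg : ∀ j, (φ j).natDegree = j) (hφ0 : φ 0 = 1) (N : ℕ) (a b : ℕ → ℝ)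
    (h : ∑ i ∈ Finset.range N, C (a i) * φ i = ∑ i ∈ Finset.range N, C (b i) * φ i) :
    ∀ i < N, a i = b i := by
  have h0 : ∑ i ∈ Finset.range N, C (a i - b i) * φ i = 0 := by
    simp only [map_sub, sub_mul, Finset.sum_sub_distrib, h, sub_self]
  intro i hi
  have := sum_eq_zero_coeffs φ hdeg hφ0 N _ h0 i hi
  linarith

theorem degree_graded_linearization_recursion (φ : ℕ → Polynomial ℝ) (α β γ : ℕ → ℝ)
    (hdeg : ∀ j, (φ j).natDegree = j) (hφ0 : φ 0 = 1)
    (hα : ∀ j, α j ≠ 0) (hγ0 : γ 0 = 0)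
    (hrec : ∀ j, X * φ j = C (α j) * φ (j + 1) + C (β j) * φ j + C (γ j) * φ (j - 1))
    (c : ℕ → ℕ → ℤ → ℝ)
    (hcdef : ∀ j k, φ j * φ k = ∑ i ∈ Finset.range (j + k + 1), C (c j k (i : ℤ)) * φ i)
    (hcneg : ∀ (j k : ℕ) (i : ℤ), i < 0 → c j k i = 0)
    (hchigh : ∀ (j k : ℕ) (i : ℤ), (j : ℤ) + k < i → c j k i = 0) :
    ∀ (j k i : ℕ), 2 ≤ j →
      c j k (i : ℤ) = (1 / α (j - 1)) *
        (α (i - 1) * c (j - 1) k ((i : ℤ) - 1) + (β i - β (j - 1)) * c (j - 1) k (i : ℤ) +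
          γ (i + 1) * c (j - 1) k ((i : ℤ) + 1) - γ (j - 1) * c (j - 2) k (i : ℤ)) := by
  intro j k i hj
  obtain ⟨m, rfl⟩ : ∃ m, j = m + 2 := ⟨j - 2, by omega⟩
  simp only [show m + 2 - 1 = m + 1 from rfl, show m + 2 - 2 = m from rfl]
  -- the target coefficient function
  set D : ℕ → ℝ := fun i =>
    α (i - 1) * c (m + 1) k ((i : ℤ) - 1) + β i * c (m + 1) k (i : ℤ) +
      γ (i + 1) * c (m + 1) k ((i : ℤ) + 1) - β (m + 1) * c (m + 1) k (i : ℤ) -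
      γ (m + 1) * c m k (i : ℤ) with hD
  -- Step 1: the three reindexed sums.
  have hA : ∑ i ∈ Finset.range (m + k + 2), C (α i * c (m + 1) k (i : ℤ)) * φ (i + 1)
      = ∑ i ∈ Finset.range (m + k + 3),
          C (α (i - 1) * c (m + 1) k ((i : ℤ) - 1)) * φ i := by
    conv_rhs => rw [Finset.sum_range_succ']
    have h0 : c (m + 1) k (((0 : ℕ) : ℤ) - 1) = 0 := hcneg _ _ _ (by norm_num)
    rw [h0]
    simp only [mul_zero, map_zero, zero_mul, add_zero]
    apply Finset.sum_congr rfl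
    intro i _
    have e1 : i + 1 - 1 = i := by omega
    have e2 : ((i + 1 : ℕ) : ℤ) - 1 = (i : ℤ) := by push_cast; ring
    rw [e1, e2]
  have hB : ∑ i ∈ Finset.range (m + k + 2), C (β i * c (m + 1) k (i : ℤ)) * φ i
      = ∑ i ∈ Finset.range (m + k + 3), C (β i * c (m + 1) k (i : ℤ)) * φ i := by
    conv_rhs => rw [Finset.sum_range_succ]
    have h1 : c (m + 1) k ((m + k + 2 : ℕ) : ℤ) = 0 := hchigh _ _ _ (by push_cast; omega)
    rw [h1]
    simp
  have hG : ∑ i ∈ Finset.range (m + k + 2), C (γ i * c (m + 1) k (i : ℤ)) * φ (i - 1)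
      = ∑ i ∈ Finset.range (m + k + 3),
          C (γ (i + 1) * c (m + 1) k ((i : ℤ) + 1)) * φ i := by
    conv_rhs => rw [Finset.sum_range_succ, Finset.sum_range_succ]
    have h1 : c (m + 1) k (((m + k + 2 : ℕ) : ℤ) + 1) = 0 := hchigh _ _ _ (by push_cast; omega)
    have h2 : c (m + 1) k (((m + k + 1 : ℕ) : ℤ) + 1) = 0 := hchigh _ _ _ (by push_cast; omega)
    rw [h1, h2]
    simp only [mul_zero, map_zero, zero_mul, add_zero]
    conv_lhs => rw [show m + k + 2 = (m + k + 1) + 1 from rfl, Finset.sum_range_succ']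
    have h0 : γ 0 * c (m + 1) k ((0 : ℕ) : ℤ) = 0 := by rw [hγ0]; ring
    rw [h0]
    simp only [map_zero, zero_mul, add_zero]
    apply Finset.sum_congr rfl
    intro i _
    have e1 : i + 1 - 1 = i := by omega
    have e2 : ((i + 1 : ℕ) : ℤ) = (i : ℤ) + 1 := by push_cast; ring
    rw [e1, e2]
  -- Step 2: main identity between two expansions
  have hmain : ∑ i ∈ Finset.range (m + k + 3), C (α (m + 1) * c (m + 2) k (i : ℤ)) * φ i
      = ∑ i ∈ Finset.range (m + k + 3), C (D i) * φ i := by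
    have hL : ∑ i ∈ Finset.range (m + k + 3), C (α (m + 1) * c (m + 2) k (i : ℤ)) * φ i
        = C (α (m + 1)) * (φ (m + 2) * φ k) := by
      rw [hcdef (m + 2) k, show m + 2 + k + 1 = m + k + 3 by omega, Finset.mul_sum]
      apply Finset.sum_congr rfl
      intro i _
      rw [map_mul, mul_assoc]
    rw [hL]
    have hr := hrec (m + 1)
    simp only [show m + 1 + 1 = m + 2 from rfl, show m + 1 - 1 = m from rfl] at hr
    have hstep : C (α (m + 1)) * (φ (m + 2) * φ k)
        = X * (φ (m + 1) * φ k) - C (β (m + 1)) * (φ (m + 1) * φ k)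
          - C (γ (m + 1)) * (φ m * φ k) := by
      linear_combination (-(φ k)) * hr
    rw [hstep]
    -- expand X * (φ (m+1) * φ k)
    have hX : X * (φ (m + 1) * φ k)
        = ∑ i ∈ Finset.range (m + k + 2),
            (C (α i * c (m + 1) k (i : ℤ)) * φ (i + 1)
              + C (β i * c (m + 1) k (i : ℤ)) * φ i
              + C (γ i * c (m + 1) k (i : ℤ)) * φ (i - 1)) := by
      rw [hcdef (m + 1) k, show m + 1 + k + 1 = m + k + 2 by omega, Finset.mul_sum]
      apply Finset.sum_congr rfl
      intro i _
      have hri := hrec i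
      calc X * (C (c (m + 1) k (i : ℤ)) * φ i)
          = C (c (m + 1) k (i : ℤ)) * (X * φ i) := by ring
        _ = _ := by rw [hri]; simp only [map_mul]; ring
    rw [hX, Finset.sum_add_distrib, Finset.sum_add_distrib, hA, hB, hG,
      hcdef (m + 1) k, show m + 1 + k + 1 = m + k + 2 by omega,
      hcdef m k, show m + k + 1 + 1 + 1 = m + k + 3 by omega]
    -- extend the two product sums to range (m+k+3)
    have hP1 : ∑ i ∈ Finset.range (m + k + 2), C (c (m + 1) k (i : ℤ)) * φ i
        = ∑ i ∈ Finset.range (m + k + 3), C (c (m + 1) k (i : ℤ)) * φ i := by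
      conv_rhs => rw [Finset.sum_range_succ]
      have h1 : c (m + 1) k ((m + k + 2 : ℕ) : ℤ) = 0 := hchigh _ _ _ (by push_cast; omega)
      rw [h1]; simp
    have hP2 : ∑ i ∈ Finset.range (m + k + 1), C (c m k (i : ℤ)) * φ i
        = ∑ i ∈ Finset.range (m + k + 3), C (c m k (i : ℤ)) * φ i := by
      conv_rhs => rw [Finset.sum_range_succ, Finset.sum_range_succ]
      have h1 : c m k ((m + k + 2 : ℕ) : ℤ) = 0 := hchigh _ _ _ (by push_cast; omega)
      have h2 : c m k ((m + k + 1 : ℕ) : ℤ) = 0 := hchigh _ _ _ (by push_cast; omega)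
      rw [h1, h2]; simp
    rw [hP1, hP2, Finset.mul_sum, Finset.mul_sum]
    rw [← Finset.sum_add_distrib, ← Finset.sum_add_distrib,
      ← Finset.sum_sub_distrib, ← Finset.sum_sub_distrib]
    apply Finset.sum_congr rfl
    intro i _
    rw [hD]
    simp only [map_sub, map_add, map_mul]
    ring
  -- Step 3: uniqueness of coefficients
  have huniq := coeffs_unique φ hdeg hφ0 (m + k + 3) _ _ hmain
  by_cases hi : i < m + k + 3
  · have h1 := huniq i hi
    simp only [hD] at h1
    have hαne := hα (m + 1)
    field_simp
    linarith [h1]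
  · -- all coefficients vanish
    push_neg at hi
    have h0 : c (m + 2) k (i : ℤ) = 0 := by apply hchigh; push_cast; omega
    have h1 : c (m + 1) k ((i : ℤ) - 1) = 0 := by apply hchigh; push_cast; omega
    have h2 : c (m + 1) k (i : ℤ) = 0 := by apply hchigh; push_cast; omega
    have h3 : c (m + 1) k ((i : ℤ) + 1) = 0 := by apply hchigh; push_cast; omega
    have h4 : c m k (i : ℤ) = 0 := by apply hchigh; omega
    rw [h0, h1, h2, h3, h4]
    ring
end

section
/- Let T_{n,n+1} be the (n+1)×(n+2) matrix with T[i,i] = (n+1-i)/(n+1), T[i,i+1] = (i+1)/(n+1) (0-indexed, 0 ≤ i ≤ n) and zeros elsewhere. Then the product T_{n,n+1} T_{n+1,n+2} ... T_{m-1,m} equals the matrix with (i,j)-entry C(n,i) C(m-n, j-i) / C(m,j) for 0 ≤ i ≤ n, 0 ≤ j ≤ m (with out-of-range binomials equal to 0). -/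
/-- One-step Bernstein degree-elevation matrix `T_{p,p+1}`. -/
noncomputable def elevT (p : ℕ) : Matrix (Fin (p + 1)) (Fin (p + 2)) ℝ :=
  Matrix.of fun i j =>
    if (j : ℕ) = (i : ℕ) then ((p : ℝ) + 1 - (i : ℕ)) / ((p : ℝ) + 1)
    else if (j : ℕ) = (i : ℕ) + 1 then ((i : ℕ) + 1 : ℝ) / ((p : ℝ) + 1)
    else 0

/-- The product `T_{n,n+1} T_{n+1,n+2} ⋯ T_{n+k-1,n+k}`. -/
noncomputable def liftT (n : ℕ) : (k : ℕ) → Matrix (Fin (n + 1)) (Fin (n + k + 1)) ℝ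
  | 0 => 1
  | k + 1 => liftT n k * elevT (n + k)

private lemma choose_cast_ne (m r : ℕ) (h : r ≤ m) : ((m.choose r : ℕ) : ℝ) ≠ 0 :=
  Nat.cast_ne_zero.mpr (Nat.choose_pos h).ne'

private lemma div_step (x D N E w : ℝ) (hD : D ≠ 0) (hN : N ≠ 0) (hE : E ≠ 0) (hw : w ≠ 0)
    (h : D * N = E * w) : x / D * (w / N) = x / E := by
  field_simp
  linear_combination x * h.symm

private lemma choose_shift (k t : ℕ) : k.choose (k + t) = (k + 1).choose (k + 1 + t) := by
  cases t with
  | zero => simp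
  | succ t =>
    rw [Nat.choose_eq_zero_of_lt (by omega), Nat.choose_eq_zero_of_lt (by omega)]

private noncomputable def Aent (n k i : ℕ) : ℕ → ℝ := fun l =>
  if i ≤ l then (n.choose i : ℝ) * (k.choose (l - i) : ℝ) / ((n + k).choose l : ℝ) else 0

private noncomputable def Gent (n k i j : ℕ) : ℕ → ℝ := fun l =>
  Aent n k i l *
    (if j = l then (((n + k : ℕ) : ℝ) + 1 - (l : ℝ)) / (((n + k : ℕ) : ℝ) + 1)
     else if j = l + 1 then ((l : ℝ) + 1) / (((n + k : ℕ) : ℝ) + 1) else 0)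

private lemma liftT_apply (n : ℕ) : ∀ (k : ℕ) (i : Fin (n + 1)) (j : Fin (n + k + 1)),
    liftT n k i j = Aent n k (i : ℕ) (j : ℕ) := by
  intro k
  induction k with
  | zero =>
    intro i j
    show (1 : Matrix (Fin (n + 1)) (Fin (n + 1)) ℝ) i j = _
    rw [Matrix.one_apply]
    simp only [Aent]
    by_cases h : (i : ℕ) = (j : ℕ)
    · rw [if_pos (Fin.ext h), if_pos h.le, h, Nat.sub_self, Nat.choose_zero_right,
        Nat.cast_one, mul_one]
      exact (div_self (choose_cast_ne n j (by omega))).symm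
    · rw [if_neg (fun hc => h (congrArg Fin.val hc))]
      by_cases h2 : (i : ℕ) ≤ (j : ℕ)
      · rw [if_pos h2,
          Nat.choose_eq_zero_of_lt (show 0 < (j : ℕ) - (i : ℕ) by omega)]
        simp
      · rw [if_neg h2]
  | succ k ih =>
    intro i j
    show (liftT n k * elevT (n + k)) i j = _
    rw [Matrix.mul_apply]
    have key : ∀ l : Fin (n + k + 1), liftT n k i l * elevT (n + k) l j
        = Gent n k (i : ℕ) (j : ℕ) (l : ℕ) := by
      intro l
      rw [ih i l]
      rfl
    rw [Finset.sum_congr rfl (fun l _ => key l),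
      Fin.sum_univ_eq_sum_range (Gent n k (i : ℕ) (j : ℕ)) (n + k + 1)]
    set N : ℕ := n + k + 1 with hNdef
    obtain ⟨jv, hjv⟩ := j
    simp only [Fin.val_mk]
    cases jv with
    | zero =>
      have hpt : ∀ l ∈ Finset.range N, Gent n k (i : ℕ) 0 l
          = if l = 0 then
              Aent n k (i : ℕ) 0 * ((((n + k : ℕ) : ℝ) + 1 - ((0 : ℕ) : ℝ)) / (((n + k : ℕ) : ℝ) + 1))
            else 0 := by
        intro l _
        simp only [Gent]
        by_cases hl : l = 0
        · subst hl
          rw [if_pos rfl, if_pos rfl]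
        · rw [if_neg (by omega), if_neg (by omega), mul_zero, if_neg hl]
      rw [Finset.sum_congr rfl hpt, Finset.sum_ite_eq' (Finset.range N) 0,
        if_pos (by simp [hNdef])]
      rw [Nat.cast_zero, sub_zero, div_self (by positivity), mul_one]
      simp only [Aent, Nat.le_zero]
      by_cases hi : (i : ℕ) = 0
      · rw [if_pos hi, if_pos hi, hi]
        simp
      · rw [if_neg hi, if_neg (by omega)]
    | succ jv' =>
      have hpt : ∀ l ∈ Finset.range N, Gent n k (i : ℕ) (jv' + 1) l
          = (if l = jv' + 1 then
                Aent n k (i : ℕ) (jv' + 1) *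
                  ((((n + k : ℕ) : ℝ) + 1 - ((jv' + 1 : ℕ) : ℝ)) / (((n + k : ℕ) : ℝ) + 1))
             else 0)
            + (if l = jv' then
                Aent n k (i : ℕ) jv' * ((((jv' : ℕ) : ℝ) + 1) / (((n + k : ℕ) : ℝ) + 1))
             else 0) := by
        intro l _
        simp only [Gent]
        by_cases h1 : l = jv' + 1
        · subst h1
          rw [if_pos rfl, if_pos rfl, if_neg (by omega), add_zero]
        · rw [if_neg h1, if_neg (fun hc => h1 hc.symm), zero_add]
          by_cases h2 : l = jv'
          · subst h2
            rw [if_pos rfl, if_pos rfl]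
          · rw [if_neg h2, if_neg (by omega), mul_zero]
      rw [Finset.sum_congr rfl hpt, Finset.sum_add_distrib,
        Finset.sum_ite_eq' (Finset.range N) (jv' + 1), Finset.sum_ite_eq' (Finset.range N) jv']
      simp only [Finset.mem_range]
      rw [if_pos (show jv' < N by omega)]
      have hEne : (((n + (k + 1)).choose (jv' + 1) : ℕ) : ℝ) ≠ 0 :=
        choose_cast_ne _ _ (by omega)
      by_cases hile : (i : ℕ) ≤ jv' + 1
      · by_cases htop : jv' + 1 < N
        · rw [if_pos htop]
          have hD : (((n + k).choose (jv' + 1) : ℕ) : ℝ) ≠ 0 :=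
            choose_cast_ne _ _ (by omega)
          have hD' : (((n + k).choose jv' : ℕ) : ℝ) ≠ 0 :=
            choose_cast_ne _ _ (by omega)
          have hwne : (((n + k : ℕ) : ℝ) + 1 - ((jv' + 1 : ℕ) : ℝ)) ≠ 0 := by
            have h' : ((jv' + 1 : ℕ) : ℝ) ≤ ((n + k : ℕ) : ℝ) :=
              Nat.cast_le.mpr (by omega)
            push_cast at h' ⊢
            linarith
          have h1 : (((n + k).choose (jv' + 1) : ℕ) : ℝ) * (((n + k : ℕ) : ℝ) + 1)
              = (((n + (k + 1)).choose (jv' + 1) : ℕ) : ℝ)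
                  * (((n + k : ℕ) : ℝ) + 1 - ((jv' + 1 : ℕ) : ℝ)) := by
            have hnat := Nat.choose_mul_succ_eq (n + k) (jv' + 1)
            have harr : n + (k + 1) = n + k + 1 := by ring
            rw [harr]
            have hcast := congrArg (fun t : ℕ => (t : ℝ)) hnat
            push_cast [Nat.cast_sub (show jv' ≤ n + k by omega)] at hcast
            push_cast
            linarith [hcast]
          have h2 : (((n + k).choose jv' : ℕ) : ℝ) * (((n + k : ℕ) : ℝ) + 1)
              = (((n + (k + 1)).choose (jv' + 1) : ℕ) : ℝ) * (((jv' : ℕ) : ℝ) + 1) := by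
            have hnat := Nat.add_one_mul_choose_eq (n + k) jv'
            have harr : n + (k + 1) = n + k + 1 := by ring
            rw [harr]
            have hcast := congrArg (fun t : ℕ => (t : ℝ)) hnat
            push_cast at hcast
            push_cast
            linarith [hcast]
          have t1 : (n.choose (i : ℕ) : ℝ) * (k.choose ((jv' + 1) - (i : ℕ)) : ℝ)
                  / (((n + k).choose (jv' + 1) : ℕ) : ℝ)
                * ((((n + k : ℕ) : ℝ) + 1 - ((jv' + 1 : ℕ) : ℝ)) / (((n + k : ℕ) : ℝ) + 1))
              = (n.choose (i : ℕ) : ℝ) * (k.choose ((jv' + 1) - (i : ℕ)) : ℝ)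
                  / (((n + (k + 1)).choose (jv' + 1) : ℕ) : ℝ) :=
            div_step _ _ _ _ _ hD (by positivity) hEne hwne h1
          rcases Nat.lt_or_ge (i : ℕ) (jv' + 1) with hlt | hge
          · -- i ≤ jv'
            have hile' : (i : ℕ) ≤ jv' := by omega
            have t2 : (n.choose (i : ℕ) : ℝ) * (k.choose (jv' - (i : ℕ)) : ℝ)
                    / (((n + k).choose jv' : ℕ) : ℝ)
                  * ((((jv' : ℕ) : ℝ) + 1) / (((n + k : ℕ) : ℝ) + 1))
                = (n.choose (i : ℕ) : ℝ) * (k.choose (jv' - (i : ℕ)) : ℝ)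
                    / (((n + (k + 1)).choose (jv' + 1) : ℕ) : ℝ) :=
              div_step _ _ _ _ _ hD' (by positivity) hEne (by positivity) h2
            simp only [Aent]
            rw [if_pos hile, if_pos hile', if_pos hile, t1, t2, ← add_div]
            congr 1
            rw [show (jv' + 1) - (i : ℕ) = (jv' - (i : ℕ)) + 1 by omega,
              Nat.choose_succ_succ]
            push_cast
            ring
          · -- i = jv' + 1
            simp only [Aent]
            rw [if_neg (by omega : ¬ (i : ℕ) ≤ jv'), zero_mul, add_zero, if_pos hile,
              if_pos hile, t1, show jv' + 1 - (i : ℕ) = 0 by omega,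
              Nat.choose_zero_right, Nat.choose_zero_right]
        · -- jv' + 1 = N : last column
          rw [if_neg htop, zero_add]
          have hjv'' : jv' = n + k := by omega
          have hione : ((((jv' : ℕ) : ℝ) + 1) / (((n + k : ℕ) : ℝ) + 1)) = 1 := by
            rw [hjv'', div_self]
            positivity
          rw [hione, mul_one]
          have hDone : (((n + k).choose jv' : ℕ) : ℝ) = 1 := by
            rw [hjv'', Nat.choose_self, Nat.cast_one]
          have hEone : (((n + (k + 1)).choose (jv' + 1) : ℕ) : ℝ) = 1 := by
            rw [show n + (k + 1) = n + k + 1 by ring, hjv'', Nat.choose_self, Nat.cast_one]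
          have hnum : k.choose (jv' - (i : ℕ)) = (k + 1).choose (jv' + 1 - (i : ℕ)) := by
            rw [show jv' - (i : ℕ) = k + (n - (i : ℕ)) by omega,
              show jv' + 1 - (i : ℕ) = k + 1 + (n - (i : ℕ)) by omega]
            exact choose_shift k (n - (i : ℕ))
          simp only [Aent]
          rw [if_pos (show (i : ℕ) ≤ jv' by omega), if_pos hile, hDone, hEone, hnum]
      · -- i > jv' + 1
        have hA1 : Aent n k (i : ℕ) (jv' + 1) = 0 := by
          simp only [Aent]; rw [if_neg hile]
        have hA2 : Aent n k (i : ℕ) jv' = 0 := by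
          simp only [Aent]; rw [if_neg (by omega)]
        have hA3 : Aent n (k + 1) (i : ℕ) (jv' + 1) = 0 := by
          simp only [Aent]; rw [if_neg hile]
        rw [hA1, hA2, hA3, zero_mul, zero_mul, add_zero]
        simp

theorem bernstein_lifting_matrix_product (n k : ℕ) (hk : 1 ≤ k) (i : Fin (n + 1))
    (j : Fin (n + k + 1)) :
    liftT n k i j =
      if (i : ℕ) ≤ (j : ℕ) then
        (n.choose i : ℝ) * (k.choose ((j : ℕ) - (i : ℕ)) : ℝ) / ((n + k).choose j : ℝ)
      else 0 := by
  rw [liftT_apply n k i j]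
  rfl
end
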